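/- Proposition 3.2(i): If there exists ρ₀ > 0 such that the function X ↦ f(X) + (ρ₀/2)‖𝒜(X) − b‖_2² is strongly convex on ℝ^{n×n}, then for every β ∈ ℝ the level set S_β = {(U,V) ∈ ℝ^{n×r} × ℝ^{n×r} : f(UVᵀ) + (ρ₀/2)‖U − V‖_F² + (ρ₀/2)‖𝒜(UVᵀ) − b‖_2² ≤ β} is either compact or empty. -/

import Mathlib

open Matrix
open scoped BigOperators

noncomputable section

/-- Frobenius inner product of two real matrices. -/
def frobInner {α β : Type*} [Fintype α] [Fintype β] (X Y : Matrix α β ℝ) : ℝ :=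
  ∑ i, ∑ j, X i j * Y i j

/-- Frobenius norm of a real matrix. -/
def frobNorm {α β : Type*} [Fintype α] [Fintype β] (X : Matrix α β ℝ) : ℝ :=
  Real.sqrt (∑ i, ∑ j, (X i j) ^ 2)

/-- Euclidean norm of a real vector. -/
def vecNorm {α : Type*} [Fintype α] (v : α → ℝ) : ℝ :=
  Real.sqrt (∑ i, (v i) ^ 2)

/-- The linear map `𝒜(X) = (⟨A 1, X⟩, …, ⟨A m, X⟩)`. -/
def Aop {n m : ℕ} (A : Fin m → Matrix (Fin n) (Fin n) ℝ)
    (X : Matrix (Fin n) (Fin n) ℝ) : Fin m → ℝ :=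
  fun i => frobInner (A i) X

/-- `s_A = Σ_i ‖A_i‖_F²`. -/
def sA {n m : ℕ} (A : Fin m → Matrix (Fin n) (Fin n) ℝ) : ℝ :=
  ∑ i, (frobNorm (A i)) ^ 2

/-- `(U, V, λ)` is an ε-KKT point of the penalized problem
`min f(UVᵀ) + (γ/2)‖U-V‖² s.t. 𝒜(UVᵀ) = b`, where `grad` denotes the gradient of `f`. -/
def IsPenEpsKKT {n m r : ℕ} (grad : Matrix (Fin n) (Fin n) ℝ → Matrix (Fin n) (Fin n) ℝ)
    (A : Fin m → Matrix (Fin n) (Fin n) ℝ) (b : Fin m → ℝ) (γ ε : ℝ)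
    (U V : Matrix (Fin n) (Fin r) ℝ) (lam : Fin m → ℝ) : Prop :=
  frobNorm (grad (U * Vᵀ) * V + γ • (U - V) + ∑ i, lam i • (A i * V)) ≤ ε ∧
  frobNorm (grad (V * Uᵀ) * U + γ • (V - U) + ∑ i, lam i • (A i * U)) ≤ ε ∧
  vecNorm (fun i => Aop A (U * Vᵀ) i - b i) ≤ ε

/-- `(U, λ)` is an ε-KKT point of the Burer–Monteiro problem
`min f(UUᵀ) s.t. 𝒜(UUᵀ) = b`, where `grad` denotes the gradient of `f`. -/
def IsBMEpsKKT {n m r : ℕ} (grad : Matrix (Fin n) (Fin n) ℝ → Matrix (Fin n) (Fin n) ℝ)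
    (A : Fin m → Matrix (Fin n) (Fin n) ℝ) (b : Fin m → ℝ) (ε : ℝ)
    (U : Matrix (Fin n) (Fin r) ℝ) (lam : Fin m → ℝ) : Prop :=
  frobNorm ((2 : ℝ) • (grad (U * Uᵀ) * U) + ∑ i, lam i • (A i * U)) ≤ ε ∧
  vecNorm (fun i => Aop A (U * Uᵀ) i - b i) ≤ ε

/-- The augmented Lagrangian `L_ρ(U,V,λ)` of the penalized problem. -/
def augL {n m r : ℕ} (f : Matrix (Fin n) (Fin n) ℝ → ℝ)
    (A : Fin m → Matrix (Fin n) (Fin n) ℝ) (b : Fin m → ℝ) (ρ γ : ℝ)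
    (U V : Matrix (Fin n) (Fin r) ℝ) (lam : Fin m → ℝ) : ℝ :=
  f (U * Vᵀ) + γ / 2 * (frobNorm (U - V)) ^ 2
    + ∑ i, lam i * (Aop A (U * Vᵀ) i - b i)
    + ρ / 2 * (vecNorm (fun i => Aop A (U * Vᵀ) i - b i)) ^ 2

/-- The level set `S_β` of the penalty function. -/
def Sset {n m r : ℕ} (f : Matrix (Fin n) (Fin n) ℝ → ℝ)
    (A : Fin m → Matrix (Fin n) (Fin n) ℝ) (b : Fin m → ℝ) (ρ₀ β : ℝ) :
    Set (Matrix (Fin n) (Fin r) ℝ × Matrix (Fin n) (Fin r) ℝ) :=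
  {p | f (p.1 * p.2ᵀ) + ρ₀ / 2 * (frobNorm (p.1 - p.2)) ^ 2
      + ρ₀ / 2 * (vecNorm (fun i => Aop A (p.1 * p.2ᵀ) i - b i)) ^ 2 ≤ β}

/-- `𝒞(U)`: the `nr × m` matrix whose `i`-th column is the vectorization of `A_i U`. -/
def Cmat {n m r : ℕ} (A : Fin m → Matrix (Fin n) (Fin n) ℝ)
    (U : Matrix (Fin n) (Fin r) ℝ) : Matrix (Fin n × Fin r) (Fin m) ℝ :=
  Matrix.of fun p i => (A i * U) p.1 p.2

/-- Smallest singular value of a real matrix, as the infimum of `‖Mx‖` over unit vectors. -/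
def sigmaMin {α β : Type*} [Fintype α] [Fintype β] (M : Matrix α β ℝ) : ℝ :=
  sInf {s | ∃ x : β → ℝ, vecNorm x = 1 ∧ s = vecNorm (M.mulVec x)}

/-- Norm of the full gradient of the augmented Lagrangian at `(U, V, λ)`
(for symmetric `f`, with `grad` the gradient of `f`). -/
def gradAugLNorm {n m r : ℕ} (grad : Matrix (Fin n) (Fin n) ℝ → Matrix (Fin n) (Fin n) ℝ)
    (A : Fin m → Matrix (Fin n) (Fin n) ℝ) (b : Fin m → ℝ) (ρ γ : ℝ)
    (U V : Matrix (Fin n) (Fin r) ℝ) (lam : Fin m → ℝ) : ℝ :=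
  Real.sqrt
    ((frobNorm (grad (U * Vᵀ) * V + γ • (U - V)
        + ∑ i, (lam i + ρ * (Aop A (U * Vᵀ) i - b i)) • (A i * V))) ^ 2
      + (frobNorm (grad (V * Uᵀ) * U + γ • (V - U)
        + ∑ i, (lam i + ρ * (Aop A (U * Vᵀ) i - b i)) • (A i * U))) ^ 2
      + (vecNorm (fun i => Aop A (U * Vᵀ) i - b i)) ^ 2)

/-- Distance between two primal-dual triples, induced by the Frobenius/Euclidean norms. -/
def tripDist {n m r : ℕ}
    (p q : Matrix (Fin n) (Fin r) ℝ × Matrix (Fin n) (Fin r) ℝ × (Fin m → ℝ)) : ℝ :=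
  Real.sqrt ((frobNorm (p.1 - q.1)) ^ 2 + (frobNorm (p.2.1 - q.2.1)) ^ 2
    + (vecNorm (fun i => p.2.2 i - q.2.2 i)) ^ 2)

/-- The set `𝒲` of KKT points of the penalized problem. -/
def KKTset {n m : ℕ} (r : ℕ) (grad : Matrix (Fin n) (Fin n) ℝ → Matrix (Fin n) (Fin n) ℝ)
    (A : Fin m → Matrix (Fin n) (Fin n) ℝ) (b : Fin m → ℝ) (γ : ℝ) :
    Set (Matrix (Fin n) (Fin r) ℝ × Matrix (Fin n) (Fin r) ℝ × (Fin m → ℝ)) :=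
  {p | IsPenEpsKKT grad A b γ 0 p.1 p.2.1 p.2.2}

section AuxLemmas

lemma frobNorm_nonneg' {α β : Type*} [Fintype α] [Fintype β] (X : Matrix α β ℝ) :
    0 ≤ frobNorm X := Real.sqrt_nonneg _

lemma frobNorm_sq {α β : Type*} [Fintype α] [Fintype β] (X : Matrix α β ℝ) :
    (frobNorm X) ^ 2 = ∑ i, ∑ j, (X i j) ^ 2 := by
  rw [frobNorm, Real.sq_sqrt]
  positivity

lemma vecNorm_sq {α : Type*} [Fintype α] (v : α → ℝ) :
    (vecNorm v) ^ 2 = ∑ i, (v i) ^ 2 := by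
  rw [vecNorm, Real.sq_sqrt]; positivity

lemma entry_sq_le_frobNorm_sq {α β : Type*} [Fintype α] [Fintype β] (X : Matrix α β ℝ)
    (i : α) (j : β) : (X i j) ^ 2 ≤ (frobNorm X) ^ 2 := by
  rw [frobNorm_sq]
  calc (X i j) ^ 2 ≤ ∑ j', (X i j') ^ 2 :=
        Finset.single_le_sum (f := fun j' => (X i j') ^ 2)
          (fun _ _ => sq_nonneg _) (Finset.mem_univ j)
    _ ≤ ∑ i', ∑ j', (X i' j') ^ 2 :=
        Finset.single_le_sum (f := fun i' => ∑ j', (X i' j') ^ 2)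
          (fun i' _ => Finset.sum_nonneg fun _ _ => sq_nonneg _) (Finset.mem_univ i)

lemma abs_entry_le_frobNorm {α β : Type*} [Fintype α] [Fintype β] (X : Matrix α β ℝ)
    (i : α) (j : β) : |X i j| ≤ frobNorm X := by
  have h1 := entry_sq_le_frobNorm_sq X i j
  have h2 := frobNorm_nonneg' X
  nlinarith [abs_nonneg (X i j), sq_abs (X i j)]

lemma box_isCompact (α β : Type*) [Fintype α] [Fintype β] (t : ℝ) :
    IsCompact {X : Matrix α β ℝ | ∀ i j, |X i j| ≤ t} := by
  have he : {X : Matrix α β ℝ | ∀ i j, |X i j| ≤ t}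
      = Set.univ.pi fun _ : α => Set.univ.pi fun _ : β => Set.Icc (-t) t := by
    ext X
    exact ⟨fun hX i _ j _ => Set.mem_Icc.2 (abs_le.1 (hX i j)),
      fun hX i j => abs_le.2 (Set.mem_Icc.1 (hX i (Set.mem_univ i) j (Set.mem_univ j)))⟩
  rw [he]
  exact isCompact_univ_pi fun _ => isCompact_univ_pi fun _ => isCompact_Icc

end AuxLemmas

/-- Proposition 3.2(i): if `f + (ρ₀/2)‖𝒜(·) − b‖²` is strongly convex,
then every level set `S_β` is compact or empty. -/
theorem level_set_compact_of_strongly_convex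
    (n m r : ℕ) (hn : 0 < n) (hm : 0 < m) (hr : 0 < r)
    (f : Matrix (Fin n) (Fin n) ℝ → ℝ)
    (hconv : ConvexOn ℝ Set.univ f) (hfCont : Continuous f)
    (A : Fin m → Matrix (Fin n) (Fin n) ℝ) (hAsym : ∀ i, (A i)ᵀ = A i)
    (b : Fin m → ℝ)
    (ρ₀ : ℝ) (hρ₀ : 0 < ρ₀) (μ : ℝ) (hμ : 0 < μ)
    (hsc : ConvexOn ℝ Set.univ (fun X : Matrix (Fin n) (Fin n) ℝ =>
      f X + ρ₀ / 2 * (vecNorm (fun i => Aop A X i - b i)) ^ 2 - μ / 2 * (frobNorm X) ^ 2)) :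
    ∀ β : ℝ, IsCompact (Sset (r := r) f A b ρ₀ β) ∨ Sset (r := r) f A b ρ₀ β = ∅ := by
  classical
  intro β
  left
  set g : Matrix (Fin n) (Fin n) ℝ → ℝ :=
    fun X => f X + ρ₀ / 2 * (vecNorm fun i => Aop A X i - b i) ^ 2 with hgdef
  set h : Matrix (Fin n) (Fin n) ℝ → ℝ :=
    fun X => g X - μ / 2 * (frobNorm X) ^ 2 with hhdef
  have hh_conv : ConvexOn ℝ Set.univ h := hsc
  -- continuity
  have hAcont : ∀ i, Continuous fun X : Matrix (Fin n) (Fin n) ℝ => Aop A X i := by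
    intro i
    unfold Aop frobInner
    exact continuous_finset_sum _ fun a _ => continuous_finset_sum _ fun c _ =>
      continuous_const.mul ((continuous_apply c).comp (continuous_apply a) : Continuous fun X : Matrix (Fin n) (Fin n) ℝ => X a c)
  have hgcont : Continuous g := by
    have he : g = fun X => f X + ρ₀ / 2 * ∑ i, (Aop A X i - b i) ^ 2 := by
      funext X; rw [hgdef]; simp [vecNorm_sq]
    rw [he]
    exact hfCont.add (continuous_const.mul (continuous_finset_sum _ fun i _ =>
      ((hAcont i).sub continuous_const).pow 2))
  -- bound h above on the unit box
  obtain ⟨M0, hM0⟩ : BddAbove (h '' {X : Matrix (Fin n) (Fin n) ℝ | ∀ i j, |X i j| ≤ 1}) := by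
    have hhcont : Continuous h := by
      have he : h = fun X => g X - μ / 2 * ∑ i, ∑ j, (X i j) ^ 2 := by
        funext X; rw [hhdef]; simp [frobNorm_sq]
      rw [he]
      exact hgcont.sub (continuous_const.mul (continuous_finset_sum _ fun i _ =>
        continuous_finset_sum _ fun j _ =>
          ((continuous_apply j).comp (continuous_apply i)).pow 2))
    exact (box_isCompact _ _ 1).bddAbove_image hhcont.continuousOn
  set M : ℝ := max M0 (max |h 0| 1) with hMdef
  have hMnn : (0 : ℝ) ≤ M := le_trans zero_le_one (le_trans (le_max_right _ _) (le_max_right _ _))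
  have habsh0 : |h 0| ≤ M := le_trans (le_max_left _ _) (le_max_right _ _)
  have hMub : ∀ Y : Matrix (Fin n) (Fin n) ℝ, (∀ i j, |Y i j| ≤ 1) → h Y ≤ M :=
    fun Y hY => le_trans (hM0 (Set.mem_image_of_mem h hY)) (le_max_left _ _)
  -- coercivity
  set T : ℝ := max 1 (2 / μ * (max β 0 + 3 * M)) with hTdef
  have hT1 : (1 : ℝ) ≤ T := le_max_left _ _
  clear_value g h M T
  have hcoer : ∀ X : Matrix (Fin n) (Fin n) ℝ, g X ≤ β → frobNorm X ≤ T := by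
    intro X hX
    by_cases htle : frobNorm X ≤ 1
    · exact htle.trans hT1
    push_neg at htle
    set t : ℝ := frobNorm X with htdef
    have ht0 : (0 : ℝ) < t := lt_trans one_pos htle
    have ht1 : (1 : ℝ) ≤ t := le_of_lt htle
    set Y : Matrix (Fin n) (Fin n) ℝ := (-(1 / t)) • X with hYdef
    have hYbox : ∀ i j, |Y i j| ≤ 1 := by
      intro i j
      have hYij : Y i j = -(1 / t) * X i j := rfl
      rw [hYij, abs_mul, abs_neg, abs_of_pos (by positivity : (0 : ℝ) < 1 / t)]
      rw [div_mul_eq_mul_div, one_mul, div_le_one ht0]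
      exact abs_entry_le_frobNorm X i j
    have hhY : h Y ≤ M := hMub Y hYbox
    clear_value Y
    have ht1' : (0 : ℝ) < t + 1 := by linarith
    have hcomb : (1 / (t + 1)) • X + (t / (t + 1)) • Y = 0 := by
      rw [hYdef, smul_smul, ← add_smul]
      have he : 1 / (t + 1) + t / (t + 1) * -(1 / t) = 0 := by
        field_simp
        ring
      rw [he, zero_smul]
    have key : h 0 ≤ 1 / (t + 1) * h X + t / (t + 1) * h Y := by
      have hk := hh_conv.2 (Set.mem_univ X) (Set.mem_univ Y)
        (by positivity : (0:ℝ) ≤ 1 / (t + 1)) (by positivity : (0:ℝ) ≤ t / (t + 1))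
        (by field_simp; ring)
      rw [hcomb] at hk
      simpa using hk
    have key' : (t + 1) * h 0 ≤ h X + t * h Y := by
      have h2 := mul_le_mul_of_nonneg_left key (le_of_lt ht1')
      have he : (t + 1) * (1 / (t + 1) * h X + t / (t + 1) * h Y) = h X + t * h Y := by
        field_simp
      rw [he] at h2
      exact h2
    have hgh : h X = g X - μ / 2 * t ^ 2 := by
      rw [htdef]; simp only [hhdef]
    clear_value t
    have hβ2 : h X + μ / 2 * t ^ 2 ≤ β := by rw [hgh]; linarith
    have h0lb : -M ≤ h 0 := neg_le_of_abs_le habsh0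
    have hβmax : β ≤ max β 0 := le_max_left _ _
    have hmax0 : (0 : ℝ) ≤ max β 0 := le_max_right _ _
    have h1 : μ * t ≤ 2 * (max β 0 + 3 * M) := by
      nlinarith [mul_le_mul_of_nonneg_left hhY (le_of_lt ht0),
        mul_le_mul_of_nonneg_left h0lb (le_of_lt ht0),
        mul_nonneg (sub_nonneg.2 ht1) hmax0,
        mul_nonneg (sub_nonneg.2 ht1) hMnn,
        mul_nonneg (mul_nonneg (le_of_lt hμ) (le_of_lt ht0)) (sub_nonneg.2 ht1)]
    have h2 : t ≤ 2 / μ * (max β 0 + 3 * M) := by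
      rw [div_mul_eq_mul_div, le_div_iff₀ hμ]
      linarith
    exact h2.trans (by rw [hTdef]; exact le_max_right _ _)
  -- lower bound of g on the box of radius T
  obtain ⟨c, hc⟩ : BddBelow (g '' {X : Matrix (Fin n) (Fin n) ℝ | ∀ i j, |X i j| ≤ T}) :=
    (box_isCompact _ _ T).bddBelow_image hgcont.continuousOn
  have hclb : ∀ X : Matrix (Fin n) (Fin n) ℝ, (∀ i j, |X i j| ≤ T) → c ≤ g X :=
    fun X hX => hc (Set.mem_image_of_mem g hX)
  -- radius for U,V
  set R2 : ℝ := 2 * (β - c) / ρ₀ + 2 * n * T with hR2def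
  set R : ℝ := Real.sqrt R2 with hRdef
  -- Sset is contained in the product of boxes of radius R
  have hsub : Sset (r := r) f A b ρ₀ β ⊆
      {U : Matrix (Fin n) (Fin r) ℝ | ∀ i j, |U i j| ≤ R} ×ˢ
      {V : Matrix (Fin n) (Fin r) ℝ | ∀ i j, |V i j| ≤ R} := by
    rintro ⟨U, V⟩ hp
    have hmem : f (U * Vᵀ) + ρ₀ / 2 * (frobNorm (U - V)) ^ 2
        + ρ₀ / 2 * (vecNorm fun i => Aop A (U * Vᵀ) i - b i) ^ 2 ≤ β := hp
    set X : Matrix (Fin n) (Fin n) ℝ := U * Vᵀ with hXdef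
    have hd2 : (0 : ℝ) ≤ (frobNorm (U - V)) ^ 2 := sq_nonneg _
    have hgX : g X + ρ₀ / 2 * (frobNorm (U - V)) ^ 2 ≤ β := by
      rw [hgdef]; dsimp only; linarith
    have hgXβ : g X ≤ β := by nlinarith
    have hXT : frobNorm X ≤ T := hcoer X hgXβ
    have hXbox : ∀ i j, |X i j| ≤ T := fun i j => (abs_entry_le_frobNorm X i j).trans hXT
    have hcgX : c ≤ g X := hclb X hXbox
    have hd2b : (∑ i, ∑ j, (U i j - V i j) ^ 2) ≤ 2 * (β - c) / ρ₀ := by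
      have he : (frobNorm (U - V)) ^ 2 = ∑ i, ∑ j, (U i j - V i j) ^ 2 := by
        rw [frobNorm_sq]
        exact Finset.sum_congr rfl fun i _ => Finset.sum_congr rfl fun j _ => by
          rw [Matrix.sub_apply]
      rw [le_div_iff₀ hρ₀]
      rw [he] at hgX
      linarith
    have htr : ∑ i, X i i ≤ (n : ℝ) * T := by
      have hT0 : (0 : ℝ) ≤ T := le_trans zero_le_one hT1
      calc ∑ i, X i i ≤ ∑ _i : Fin n, T :=
            Finset.sum_le_sum fun i _ => (le_abs_self _).trans (hXbox i i)
        _ = (n : ℝ) * T := by simp [Finset.sum_const, Finset.card_univ, mul_comm]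
    have hiden : (∑ i, ∑ j, (U i j) ^ 2) + (∑ i, ∑ j, (V i j) ^ 2)
        = (∑ i, ∑ j, (U i j - V i j) ^ 2) + 2 * ∑ i, X i i := by
      simp only [hXdef, Matrix.mul_apply, Matrix.transpose_apply, Finset.mul_sum]
      rw [← Finset.sum_add_distrib, ← Finset.sum_add_distrib]
      refine Finset.sum_congr rfl fun i _ => ?_
      rw [← Finset.sum_add_distrib, ← Finset.sum_add_distrib]
      exact Finset.sum_congr rfl fun j _ => by ring
    have hUV2 : (∑ i, ∑ j, (U i j) ^ 2) + (∑ i, ∑ j, (V i j) ^ 2) ≤ R2 := by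
      rw [hiden, hR2def]; linarith
    have hSU : ∀ (W : Matrix (Fin n) (Fin r) ℝ),
        (∑ i, ∑ j, (W i j) ^ 2) ≤ R2 → ∀ i j, |W i j| ≤ R := by
      intro W hW i j
      have h1 : (W i j) ^ 2 ≤ R2 := by
        calc (W i j) ^ 2 ≤ ∑ j', (W i j') ^ 2 :=
              Finset.single_le_sum (f := fun j' => (W i j') ^ 2)
                (fun _ _ => sq_nonneg _) (Finset.mem_univ j)
          _ ≤ ∑ i', ∑ j', (W i' j') ^ 2 :=
              Finset.single_le_sum (f := fun i' => ∑ j', (W i' j') ^ 2)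
                (fun i' _ => Finset.sum_nonneg fun _ _ => sq_nonneg _) (Finset.mem_univ i)
          _ ≤ R2 := hW
      calc |W i j| = Real.sqrt ((W i j) ^ 2) := (Real.sqrt_sq_eq_abs _).symm
        _ ≤ R := by rw [hRdef]; exact Real.sqrt_le_sqrt h1
    have hSUnn : (0:ℝ) ≤ ∑ i, ∑ j, (V i j) ^ 2 :=
      Finset.sum_nonneg fun _ _ => Finset.sum_nonneg fun _ _ => sq_nonneg _
    have hSVnn : (0:ℝ) ≤ ∑ i, ∑ j, (U i j) ^ 2 :=
      Finset.sum_nonneg fun _ _ => Finset.sum_nonneg fun _ _ => sq_nonneg _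
    exact ⟨hSU U (by linarith) , hSU V (by linarith)⟩
  -- closedness
  have hclosed : IsClosed (Sset (r := r) f A b ρ₀ β) := by
    have hmulc : Continuous fun p : Matrix (Fin n) (Fin r) ℝ × Matrix (Fin n) (Fin r) ℝ =>
        p.1 * p.2ᵀ := continuous_fst.matrix_mul continuous_snd.matrix_transpose
    have hφ : Continuous fun p : Matrix (Fin n) (Fin r) ℝ × Matrix (Fin n) (Fin r) ℝ =>
        f (p.1 * p.2ᵀ) + ρ₀ / 2 * (frobNorm (p.1 - p.2)) ^ 2
          + ρ₀ / 2 * (vecNorm fun i => Aop A (p.1 * p.2ᵀ) i - b i) ^ 2 := by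
      refine ((hfCont.comp hmulc).add ?_).add ?_
      · have he : (fun p : Matrix (Fin n) (Fin r) ℝ × Matrix (Fin n) (Fin r) ℝ =>
            ρ₀ / 2 * (frobNorm (p.1 - p.2)) ^ 2)
            = fun p => ρ₀ / 2 * ∑ i, ∑ j, (p.1 i j - p.2 i j) ^ 2 := by
          funext p
          rw [frobNorm_sq]
          congr 1
        rw [he]
        exact continuous_const.mul (continuous_finset_sum _ fun i _ =>
          continuous_finset_sum _ fun j _ =>
            (Continuous.pow (f := fun p : Matrix (Fin n) (Fin r) ℝ × Matrix (Fin n) (Fin r) ℝ =>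
              p.1 i j - p.2 i j)
              (Continuous.sub (f := fun p : Matrix (Fin n) (Fin r) ℝ × Matrix (Fin n) (Fin r) ℝ =>
                p.1 i j) (g := fun p : Matrix (Fin n) (Fin r) ℝ × Matrix (Fin n) (Fin r) ℝ =>
                p.2 i j)
              ((continuous_apply j).comp ((continuous_apply i).comp continuous_fst))
              ((continuous_apply j).comp ((continuous_apply i).comp continuous_snd))) 2))
      · have he : (fun p : Matrix (Fin n) (Fin r) ℝ × Matrix (Fin n) (Fin r) ℝ =>
            ρ₀ / 2 * (vecNorm fun i => Aop A (p.1 * p.2ᵀ) i - b i) ^ 2)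
            = fun p => ρ₀ / 2 * ∑ i, (Aop A (p.1 * p.2ᵀ) i - b i) ^ 2 := by
          funext p
          rw [vecNorm_sq]
        rw [he]
        exact continuous_const.mul (continuous_finset_sum _ fun i _ =>
          (((hAcont i).comp hmulc).sub continuous_const).pow 2)
    exact isClosed_le hφ continuous_const
  exact IsCompact.of_isClosed_subset
    ((box_isCompact _ _ R).prod (box_isCompact _ _ R)) hclosed hsub
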